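/- Let ξ ∈ ℝ³ with |ξ| = 1, and let 𝒜(ξ) be the 9×9 symmetric matrix of the Fourier-transformed linearized radiative Euler–MHD system with ν > 0, and let ℬ(ξ) = B̃ + |ξ|²D̃ be the corresponding dissipation matrix. Then ker ℬ(ξ) is spanned by e₁ = (1,0,0,0,0,0,0,0,0), and no nonzero element of ker ℬ(ξ) is an eigenvector of (Ã₀)⁻¹𝒜(ξ); i.e. the Shizuta–Kawashima condition holds. -/

import Mathlib

open Matrix

/-- Symmetrized coefficient matrices `Ã_j = Ã₀ A_j` of the linearized radiative
Euler–MHD system. -/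
noncomputable def skAt1 (μ α' β' β'' B1 B2 B3 : ℝ) : Matrix (Fin 9) (Fin 9) ℝ :=
  !![0, μ * α', 0, 0, 0, 0, 0, 0, 0;
     μ * α', 0, 0, 0, μ * β', μ * β'', 0, B2, B3;
     0, 0, 0, 0, 0, 0, 0, -B1, 0;
     0, 0, 0, 0, 0, 0, 0, 0, -B1;
     0, μ * β', 0, 0, 0, 0, 0, 0, 0;
     0, μ * β'', 0, 0, 0, 0, 0, 0, 0;
     0, 0, 0, 0, 0, 0, 0, 0, 0;
     0, B2, -B1, 0, 0, 0, 0, 0, 0;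
     0, B3, 0, -B1, 0, 0, 0, 0, 0]

noncomputable def skAt2 (μ α' β' β'' B1 B2 B3 : ℝ) : Matrix (Fin 9) (Fin 9) ℝ :=
  !![0, 0, μ * α', 0, 0, 0, 0, 0, 0;
     0, 0, 0, 0, 0, 0, -B2, 0, 0;
     μ * α', 0, 0, 0, μ * β', μ * β'', B1, 0, B3;
     0, 0, 0, 0, 0, 0, 0, 0, -B2;
     0, 0, μ * β', 0, 0, 0, 0, 0, 0;
     0, 0, μ * β'', 0, 0, 0, 0, 0, 0;
     0, -B2, B1, 0, 0, 0, 0, 0, 0;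
     0, 0, 0, 0, 0, 0, 0, 0, 0;
     0, 0, B3, -B2, 0, 0, 0, 0, 0]

noncomputable def skAt3 (μ α' β' β'' B1 B2 B3 : ℝ) : Matrix (Fin 9) (Fin 9) ℝ :=
  !![0, 0, 0, μ * α', 0, 0, 0, 0, 0;
     0, 0, 0, 0, 0, 0, -B3, 0, 0;
     0, 0, 0, 0, 0, 0, 0, -B3, 0;
     μ * α', 0, 0, 0, μ * β', μ * β'', B1, B2, 0;
     0, 0, 0, μ * β', 0, 0, 0, 0, 0;
     0, 0, 0, μ * β'', 0, 0, 0, 0, 0;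
     0, -B3, 0, B1, 0, 0, 0, 0, 0;
     0, 0, -B3, B2, 0, 0, 0, 0, 0;
     0, 0, 0, 0, 0, 0, 0, 0, 0]

/-- The symbol `𝒜(ξ) = ξ₁Ã₁ + ξ₂Ã₂ + ξ₃Ã₃`. -/
noncomputable def skA (μ α' β' β'' B1 B2 B3 : ℝ) (ξ : Fin 3 → ℝ) :
    Matrix (Fin 9) (Fin 9) ℝ :=
  ξ 0 • skAt1 μ α' β' β'' B1 B2 B3 + ξ 1 • skAt2 μ α' β' β'' B1 B2 B3
    + ξ 2 • skAt3 μ α' β' β'' B1 B2 B3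

/-- The diagonal symmetrizer `Ã₀`. -/
noncomputable def skA0 (μ ρ α' β' β'' γ' γ'' : ℝ) : Matrix (Fin 9) (Fin 9) ℝ :=
  Matrix.diagonal ![μ * α' / ρ, μ, μ, μ, μ * β' / γ', μ * β'' / γ'', 1, 1, 1]

/-- The dissipation matrix `ℬ(ξ) = B̃ + |ξ|² D̃`. -/
noncomputable def skB (μ β' β'' γ' γ'' δ' δ'' ζ η pib σa ν lam : ℝ) (ξ : Fin 3 → ℝ) :
    Matrix (Fin 9) (Fin 9) ℝ :=
  let s := ξ 0 ^ 2 + ξ 1 ^ 2 + ξ 2 ^ 2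
  !![0, 0, 0, 0, 0, 0, 0, 0, 0;
     0, μ * ν, 0, 0, 0, 0, 0, 0, 0;
     0, 0, μ * ν, 0, 0, 0, 0, 0, 0;
     0, 0, 0, μ * ν, 0, 0, 0, 0, 0;
     0, 0, 0, 0, μ * β' * (ζ + δ' * s) / γ', -(μ * β' * η / γ'), 0, 0, 0;
     0, 0, 0, 0, -(μ * β'' * pib / γ''), μ * β'' * (σa + δ'' * s) / γ'', 0, 0, 0;
     0, 0, 0, 0, 0, 0, lam * s, 0, 0;
     0, 0, 0, 0, 0, 0, 0, lam * s, 0;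
     0, 0, 0, 0, 0, 0, 0, 0, lam * s]

/-- Shizuta–Kawashima condition for the linearized radiative Euler–MHD system
with damping `ν > 0`: the kernel of `ℬ(ξ)` is spanned by `e₁`, and no nonzero
element of this kernel is an eigenvector of `(Ã₀)⁻¹ 𝒜(ξ)`. -/
theorem stmt_7 (μ ρbar α' β' β'' γ' γ'' δ' δ'' ζ η pib σa ν lam B1 B2 B3 : ℝ)
    (hμ : 0 < μ) (hρ : 0 < ρbar) (hα' : 0 < α') (hβ' : 0 < β') (hβ'' : 0 < β'')
    (hγ' : 0 < γ') (hγ'' : 0 < γ'') (hδ' : 0 < δ') (hδ'' : 0 < δ'')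
    (hζ : 0 < ζ) (hη : 0 < η) (hpib : 0 < pib) (hσa : 0 < σa)
    (hν : 0 < ν) (hlam : 0 < lam) (hcomp : ζ * σa = η * pib)
    (ξ : Fin 3 → ℝ) (hξ : ξ 0 ^ 2 + ξ 1 ^ 2 + ξ 2 ^ 2 = 1) :
    (∀ X : Fin 9 → ℝ,
        skB μ β' β'' γ' γ'' δ' δ'' ζ η pib σa ν lam ξ *ᵥ X = 0 ↔
          ∃ c : ℝ, X = c • (Pi.single (0 : Fin 9) (1:ℝ) : Fin 9 → ℝ)) ∧
    (∀ X : Fin 9 → ℝ, X ≠ 0 →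
        skB μ β' β'' γ' γ'' δ' δ'' ζ η pib σa ν lam ξ *ᵥ X = 0 →
        ∀ t : ℝ,
          ¬ ((skA0 μ ρbar α' β' β'' γ' γ'')⁻¹ * skA μ α' β' β'' B1 B2 B3 ξ) *ᵥ X
              = t • X) := by

  have hker : ∀ X : Fin 9 → ℝ,
      skB μ β' β'' γ' γ'' δ' δ'' ζ η pib σa ν lam ξ *ᵥ X = 0 ↔
        ∃ c : ℝ, X = c • (Pi.single (0 : Fin 9) (1:ℝ) : Fin 9 → ℝ) := by
    intro X
    constructor
    · intro h
      have h1 := congrFun h 1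
      have h2 := congrFun h 2
      have h3 := congrFun h 3
      have h4 := congrFun h 4
      have h5 := congrFun h (Fin.succ 4)
      have h6 := congrFun h (Fin.succ (Fin.succ 4))
      have h7 := congrFun h (Fin.succ (Fin.succ (Fin.succ 4)))
      have h8 := congrFun h (Fin.succ (Fin.succ (Fin.succ (Fin.succ 4))))
      simp [skB, Matrix.mulVec, dotProduct, Fin.sum_univ_succ, hξ] at h1 h2 h3 h4 h5 h6 h7 h8
      simp [hμ.ne', hν.ne', hlam.ne'] at h1 h2 h3 h6 h7 h8
      field_simp at h4 h5
      have h3 : X 3 = 0 := h3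
      have h6 : X 6 = 0 := h6
      have h7 : X 7 = 0 := h7
      have h8 : X 8 = 0 := h8
      have h4 : μ * β' * (ζ + δ') * X 4 + -(μ * β' * η * X 5) = 0 := by linear_combination h4
      have h5 : -(μ * β'' * pib * X 4 * γ'') + μ * β'' * (σa + δ'') * X 5 * γ'' = 0 := by linear_combination γ'' * h5
      have ha : (ζ + δ') * X 4 - η * X 5 = 0 := by
        have h' : μ * β' * ((ζ + δ') * X 4 - η * X 5) = 0 := by linear_combination h4
        rcases mul_eq_zero.mp h' with h'' | h''
        · exact absurd h'' (mul_pos hμ hβ').ne'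
        · exact h''
      have hb : pib * X 4 - (σa + δ'') * X 5 = 0 := by
        have h' : μ * β'' * γ'' * (pib * X 4 - (σa + δ'') * X 5) = 0 := by linear_combination -h5
        rcases mul_eq_zero.mp h' with h'' | h''
        · exact absurd h'' (by positivity)
        · exact h''
      have hx : (ζ * δ'' + δ' * σa + δ' * δ'') * X 4 = 0 := by
        linear_combination (σa + δ'') * ha - η * hb - X 4 * hcomp
      have e4 : X 4 = 0 := by
        rcases mul_eq_zero.mp hx with h'' | h''
        · exact absurd h'' (by positivity)
        · exact h''
      have e5 : X 5 = 0 := by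
        rw [e4] at ha
        simpa [hη.ne'] using ha
      refine ⟨X 0, ?_⟩
      funext i
      fin_cases i <;> simp [Pi.single_apply]
      exacts [h1, h2, h3, e4, e5, h6, h7, h8]
    · rintro ⟨c, rfl⟩
      funext i
      fin_cases i <;>
        simp [skB, Matrix.mulVec, dotProduct, Fin.sum_univ_succ, Pi.single_apply]
  refine ⟨hker, ?_⟩
  intro X hX h0 t heq
  obtain ⟨c, rfl⟩ := (hker X).mp h0
  have hc : c ≠ 0 := by
    rintro rfl
    simp at hX
  have hinv : (skA0 μ ρbar α' β' β'' γ' γ'')⁻¹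
      = Matrix.diagonal ![ρbar / (μ * α'), μ⁻¹, μ⁻¹, μ⁻¹, γ' / (μ * β'), γ'' / (μ * β''),
          1, 1, 1] := by
    apply Matrix.inv_eq_right_inv
    rw [skA0, Matrix.diagonal_mul_diagonal]
    have hfun : (fun i => ![μ * α' / ρbar, μ, μ, μ, μ * β' / γ', μ * β'' / γ'', 1, 1, 1] i *
        ![ρbar / (μ * α'), μ⁻¹, μ⁻¹, μ⁻¹, γ' / (μ * β'), γ'' / (μ * β''), 1, 1, 1] i)
        = fun _ => (1:ℝ) := by
      funext i
      fin_cases i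
      · show μ * α' / ρbar * (ρbar / (μ * α')) = 1
        field_simp
      · show μ * μ⁻¹ = 1
        field_simp
      · show μ * μ⁻¹ = 1
        field_simp
      · show μ * μ⁻¹ = 1
        field_simp
      · show μ * β' / γ' * (γ' / (μ * β')) = 1
        field_simp
      · show μ * β'' / γ'' * (γ'' / (μ * β'')) = 1
        field_simp
      · show (1:ℝ) * 1 = 1
        ring
      · show (1:ℝ) * 1 = 1
        ring
      · show (1:ℝ) * 1 = 1
        ring
    rw [hfun, Matrix.diagonal_one]
  rw [hinv, ← Matrix.mulVec_mulVec] at heq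
  have h1 := congrFun heq 1
  have h2 := congrFun heq 2
  have h3 := congrFun heq (Fin.succ 2)
  rw [Matrix.mulVec_smul, Matrix.mulVec_single] at h1 h2 h3
  simp [Matrix.mulVec_diagonal, skA, skAt1, skAt2, skAt3, hμ.ne', hα'.ne', hc] at h1 h2 h3
  rw [h1, h2, h3] at hξ
  norm_num at hξ
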